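/- For the Chow-Robbins game, for every t > 0 there is a dense subset of {x : (t,x) ∈ C} on which the function x ↦ V(t,x) is not differentiable. -/

import Mathlib

open MeasureTheory ProbabilityTheory Set Filter

set_option linter.unusedSectionVars false
set_option linter.deprecated false

lemma nondiff_of_two_minorants {f : ℝ → ℝ} {x₀ c d : ℝ} (hcd : c < d)
    (hc : ∀ y, f x₀ + c * (y - x₀) ≤ f y) (hd : ∀ y, f x₀ + d * (y - x₀) ≤ f y) :
    ¬ DifferentiableAt ℝ f x₀ := by
  intro h
  have hder := h.hasDerivAt
  rw [hasDerivAt_iff_tendsto_slope] at hder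
  set f' := deriv f x₀ with hf'
  have hright : Tendsto (slope f x₀) (nhdsWithin x₀ (Ioi x₀)) (nhds f') :=
    hder.mono_left (nhdsWithin_mono _ (fun y hy => ne_of_gt hy))
  have hleft : Tendsto (slope f x₀) (nhdsWithin x₀ (Iio x₀)) (nhds f') :=
    hder.mono_left (nhdsWithin_mono _ (fun y hy => ne_of_lt hy))
  have h1 : d ≤ f' := by
    refine ge_of_tendsto hright ?_
    filter_upwards [self_mem_nhdsWithin] with y hy
    have hy' : (0:ℝ) < y - x₀ := sub_pos.2 hy
    rw [slope_def_field, le_div_iff₀ hy']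
    nlinarith [hd y]
  have h2 : f' ≤ c := by
    refine le_of_tendsto hleft ?_
    filter_upwards [self_mem_nhdsWithin] with y hy
    have hy' : y - x₀ < 0 := sub_neg.2 hy
    rw [slope_def_field, div_le_iff_of_neg hy']
    nlinarith [hc y]
  linarith

lemma crg_slope (b : ℝ → ℝ) (θ K : ℝ)
    (hK : ∀ s : ℝ, s ≥ K → |b (s+1) - b s| ≤ θ) :
    ∀ (u : ℝ), u ≥ K → ∀ d : ℕ, b (u + d) - b u ≤ θ * d := by
  intro u hu d
  induction d with
  | zero => simp
  | succ d ih =>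
    have hud : u + d ≥ K := le_trans hu (by simp [le_add_iff_nonneg_right, Nat.cast_nonneg])
    have h1 : |b ((u + d) + 1) - b (u + d)| ≤ θ := hK (u + d) hud
    have h2 : b ((u + d) + 1) - b (u + d) ≤ θ := (abs_le.1 h1).2
    have h3 : (u + (d + 1 : ℕ) : ℝ) = (u + d) + 1 := by push_cast; ring
    rw [h3]
    push_cast
    linarith

lemma crg_path_sum (m : ℕ) (k : ℕ) :
    ∑ i ∈ Finset.range k, (if i < m then (-1:ℝ) else 1)
      = if k ≤ m then -(k:ℝ) else (k:ℝ) - 2*(m:ℝ) := by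
  induction k with
  | zero => simp
  | succ k ih =>
    rw [Finset.sum_range_succ, ih]
    by_cases h1 : k < m
    · rw [if_pos h1, if_pos (show k ≤ m by omega), if_pos (show k + 1 ≤ m by omega)]
      push_cast; ring
    · rw [if_neg h1, if_neg (show ¬ (k + 1 ≤ m) by omega)]
      by_cases h2 : k ≤ m
      · have hkm : k = m := by omega
        rw [if_pos h2, hkm]
        push_cast; ring
      · rw [if_neg h2]
        push_cast; ring

set_option maxHeartbeats 1000000 in
lemma crg_window (b : ℝ → ℝ) (hmono : Monotone b)
    (hslow : Tendsto (fun s : ℝ => b (s + 1) - b s) atTop (nhds 0))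
    (hlim : ∀ M : ℝ, ∃ s : ℝ, 0 < s ∧ M < b s)
    (t : ℝ) (ht : 0 < t) (α β : ℝ) (hαβ : α < β) (hβb : β ≤ b t) :
    ∃ (n m : ℕ) (x₀ : ℝ), α < x₀ ∧ x₀ < β ∧ m < n ∧
      (∀ k : ℕ, k < n → x₀ + (if k ≤ m then -(k:ℝ) else (k:ℝ) - 2*(m:ℝ)) < b (t + k)) ∧
      x₀ + ((n:ℝ) - 2*(m:ℝ)) = b (t + n) := by
  classical
  have hδpos : 0 < β - α := by linarith
  set θ := min (β - α) 1 / 8 with hθdef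
  have hθpos : 0 < θ := by
    have : 0 < min (β - α) 1 := lt_min hδpos one_pos
    positivity
  have hθ8 : θ ≤ 1/8 := by
    have : min (β - α) 1 ≤ 1 := min_le_right _ _
    rw [hθdef]; linarith
  have hθδ : 2*θ < β - α := by
    have : min (β - α) 1 ≤ β - α := min_le_left _ _
    rw [hθdef]; linarith
  obtain ⟨K, hK⟩ : ∃ K : ℝ, ∀ s : ℝ, s ≥ K → |b (s+1) - b s| ≤ θ := by
    have h := (Metric.tendsto_nhds.mp hslow) θ hθpos
    rw [eventually_atTop] at h
    obtain ⟨K, hK⟩ := h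
    refine ⟨K, fun s hs => ?_⟩
    have := hK s hs
    rw [Real.dist_eq, sub_zero] at this
    exact this.le
  set K' : ℕ := ⌈K⌉₊ with hK'def
  have hK'K : (K' : ℝ) ≥ K := Nat.le_ceil K
  have hslope : ∀ u : ℝ, u ≥ (K':ℝ) → ∀ d : ℕ, b (u + d) - b u ≤ θ * d :=
    crg_slope b θ (K':ℝ) (fun s hs => hK s (le_trans hK'K hs))
  set N₀ : ℕ := 2*K' + 2 with hN₀def
  set C : ℝ := b (t + (N₀:ℝ)) - α with hCdef
  obtain ⟨j, hjeven, hjC, hj7⟩ : ∃ j : ℕ, (∃ j'' : ℕ, j = 2*j'') ∧ C < (j:ℝ) ∧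
      2*(K':ℝ) + 8*C ≤ 7*(j:ℝ) := by
    set j' : ℕ := ⌈max C ((2*(K':ℝ) + 8*C)/7)⌉₊ with hj'def
    have hj'C : C ≤ (j' : ℝ) := le_trans (le_max_left _ _) (Nat.le_ceil _)
    have hj'7 : (2*(K':ℝ) + 8*C)/7 ≤ (j' : ℝ) := le_trans (le_max_right _ _) (Nat.le_ceil _)
    have hj'0 : (0:ℝ) ≤ (j':ℝ) := Nat.cast_nonneg _
    refine ⟨2*j' + 2, ⟨j' + 1, by ring⟩, ?_, ?_⟩
    · push_cast; nlinarith
    · push_cast; nlinarith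
  have hex : ∃ i : ℕ, α + j < b (t + ((N₀ + 2*i : ℕ) : ℝ)) := by
    obtain ⟨s, hs, hbs⟩ := hlim (α + j)
    refine ⟨⌈s⌉₊, lt_of_lt_of_le hbs (hmono ?_)⟩
    have h1 : s ≤ (⌈s⌉₊ : ℝ) := Nat.le_ceil s
    have h2 : ((⌈s⌉₊:ℝ)) ≤ ((N₀ + 2*⌈s⌉₊ : ℕ) : ℝ) := by
      have hc1 : (0:ℝ) ≤ (N₀:ℝ) := Nat.cast_nonneg _
      have hc2 : (0:ℝ) ≤ ((⌈s⌉₊:ℕ):ℝ) := Nat.cast_nonneg _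
      push_cast
      nlinarith
    linarith
  obtain ⟨i₀, hi₀spec, hi₀min⟩ : ∃ i : ℕ, (α + j < b (t + ((N₀ + 2*i : ℕ) : ℝ))) ∧
      ∀ i' : ℕ, i' < i → ¬ (α + j < b (t + ((N₀ + 2*i' : ℕ) : ℝ))) :=
    ⟨Nat.find hex, Nat.find_spec hex, fun i' h => Nat.find_min hex h⟩
  have hi₀pos : 1 ≤ i₀ := by
    by_contra h0
    push_neg at h0
    have he : i₀ = 0 := by omega
    rw [he] at hi₀spec
    simp only [Nat.mul_zero, Nat.add_zero] at hi₀spec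
    rw [hCdef] at hjC
    linarith
  set n : ℕ := N₀ + 2*i₀ with hndef
  have hn_gt : α + (j:ℝ) < b (t + (n:ℝ)) := hi₀spec
  set n₂ : ℕ := N₀ + 2*(i₀ - 1) with hn₂def
  have hn₂n : n = n₂ + 2 := by omega
  have hmin : b (t + (n₂:ℝ)) ≤ α + j := by
    have h := hi₀min (i₀ - 1) (by omega)
    push_neg at h
    exact h
  have hK'n₂ : (K':ℝ) ≤ t + (n₂:ℝ) := by
    have h1 : (K':ℝ) ≤ (n₂:ℝ) := by
      have : K' ≤ n₂ := by omega
      exact_mod_cast this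
    linarith
  have hupper : b (t + (n:ℝ)) ≤ α + j + 2*θ := by
    have h := hslope (t + (n₂:ℝ)) hK'n₂ 2
    have hcast : (t + (n₂:ℝ)) + ((2:ℕ):ℝ) = t + (n:ℝ) := by
      rw [hn₂n]; push_cast; ring
    rw [hcast] at h
    push_cast at h
    linarith
  set x₀ : ℝ := b (t + (n:ℝ)) - j with hx₀def
  have hx₀α : α < x₀ := by rw [hx₀def]; linarith
  have hx₀β : x₀ < β := by rw [hx₀def]; linarith
  -- sublinearity: n - j is large
  have hsub : b (t + (n:ℝ)) ≤ α + C + θ * ((n:ℝ) - N₀) := by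
    have hK'N₀ : (K':ℝ) ≤ t + (N₀:ℝ) := by
      have : (K':ℝ) ≤ (N₀:ℝ) := by
        have : K' ≤ N₀ := by omega
        exact_mod_cast this
      linarith
    have h := hslope (t + (N₀:ℝ)) hK'N₀ (2*i₀)
    have hcast : (t + (N₀:ℝ)) + ((2*i₀ : ℕ):ℝ) = t + (n:ℝ) := by push_cast [hndef]; ring
    rw [hcast] at h
    have : ((2*i₀ : ℕ):ℝ) = (n:ℝ) - (N₀:ℝ) := by push_cast [hndef]; ring
    rw [this] at h
    rw [hCdef]
    linarith
  have hnj : 2*K' + 2 ≤ n - j ∧ j ≤ n := by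
    have hθn : θ * ((n:ℝ) - N₀) ≤ (1/8) * (n:ℝ) := by
      have h1 : (0:ℝ) ≤ (n:ℝ) - N₀ := by
        have h' : N₀ ≤ n := by omega
        have := (Nat.cast_le (α := ℝ)).2 h'
        linarith
      have hc1 : (0:ℝ) ≤ (N₀:ℝ) := Nat.cast_nonneg _
      nlinarith
    have h2 : α + (j:ℝ) < α + C + (1/8)*(n:ℝ) := by linarith
    -- so 8(j - C) < n
    have h3 : 8*((j:ℝ) - C) < (n:ℝ) := by linarith
    have h4 : 7*(j:ℝ) - 8*C ≥ 2*(K':ℝ) := by linarith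
    have h5 : (n:ℝ) - (j:ℝ) > 2*(K':ℝ) := by linarith
    constructor
    · -- n - j ≥ 2K' + 2 using parity
      have hjn : j ≤ n := by
        by_contra hc
        push_neg at hc
        have h' : (n:ℝ) < (j:ℝ) := by exact_mod_cast hc
        have hc1 : (0:ℝ) ≤ (K':ℝ) := Nat.cast_nonneg _
        linarith
      have h6 : 2*K' < n - j := by
        have : (2*K' : ℝ) < ((n - j : ℕ):ℝ) := by
          rw [Nat.cast_sub hjn]
          push_cast
          linarith
        exact_mod_cast this
      -- parity: n and j both even
      obtain ⟨j'', hj''⟩ := hjeven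
      have : (n - j) % 2 = 0 := by omega
      omega
    · by_contra hc
      push_neg at hc
      have h' : (n:ℝ) < (j:ℝ) := by exact_mod_cast hc
      have hc1 : (0:ℝ) ≤ (K':ℝ) := Nat.cast_nonneg _
      linarith
  obtain ⟨hnj1, hnj2⟩ := hnj
  set m : ℕ := (n - j)/2 with hmdef
  obtain ⟨j'', hj''⟩ := hjeven
  have h2m : 2*m = n - j := by omega
  have hmK : K' + 1 ≤ m := by omega
  have hmn : m < n := by omega
  refine ⟨n, m, x₀, hx₀α, hx₀β, hmn, ?_, ?_⟩
  · intro k hk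
    by_cases hkm : k ≤ m
    · rw [if_pos hkm]
      have hc1 : (0:ℝ) ≤ (k:ℝ) := Nat.cast_nonneg _
      have h1 : x₀ < b (t + (k:ℝ)) :=
        lt_of_lt_of_le (lt_of_lt_of_le hx₀β hβb) (hmono (by linarith))
      have h2 : -(k:ℝ) ≤ 0 := by linarith
      linarith
    · rw [if_neg hkm]
      push_neg at hkm
      -- x₀ + k - 2m < b (t + k) ⟺ b(t+n) - b(t+k) < n - k
      have hK'k : (K':ℝ) ≤ t + (k:ℝ) := by
        have : K' ≤ k := by omega
        have h := (Nat.cast_le (α := ℝ)).2 this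
        linarith
      have h := hslope (t + (k:ℝ)) hK'k (n - k)
      have hcast : (t + (k:ℝ)) + ((n - k : ℕ):ℝ) = t + (n:ℝ) := by
        rw [Nat.cast_sub hk.le]; ring
      rw [hcast, Nat.cast_sub hk.le] at h
      have hd1 : (1:ℝ) ≤ (n:ℝ) - (k:ℝ) := by
        have : k + 1 ≤ n := hk
        have := (Nat.cast_le (α := ℝ)).2 this
        push_cast at this
        linarith
      have h8 : θ * ((n:ℝ) - (k:ℝ)) < (n:ℝ) - (k:ℝ) := by nlinarith
      have hjm : (j:ℝ) = (n:ℝ) - 2*(m:ℝ) := by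
        have : j = n - 2*m := by omega
        rw [this, Nat.cast_sub (by omega)]
        push_cast; ring
      rw [hx₀def, hjm]
      linarith
  · have hjm : (j:ℝ) = (n:ℝ) - 2*(m:ℝ) := by
      have : j = n - 2*m := by omega
      rw [this, Nat.cast_sub (by omega)]
      push_cast; ring
    rw [hx₀def, hjm]
    ring


section CRG

variable {Ω : Type*} [MeasurableSpace Ω]

lemma measurable_sInf_nat {A : ℕ → Set Ω} (hA : ∀ n, MeasurableSet (A n)) :
    Measurable (fun ω => sInf {n | ω ∈ A n}) := by
  refine measurable_to_countable' fun n => ?_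
  have hset : (fun ω => sInf {k | ω ∈ A k}) ⁻¹' {n} =
      ((A n ∩ ⋂ k ∈ Finset.range n, (A k)ᶜ) ∪ (if n = 0 then ⋂ k, (A k)ᶜ else ∅)) := by
    ext ω
    simp only [mem_preimage, mem_singleton_iff, mem_union, mem_inter_iff, mem_iInter,
      mem_compl_iff, Finset.mem_range]
    constructor
    · intro h
      by_cases hne : {k | ω ∈ A k}.Nonempty
      · left
        have hmem := Nat.sInf_mem hne
        rw [h] at hmem
        refine ⟨hmem, fun k hk hak => ?_⟩
        have := Nat.sInf_le (show k ∈ {k | ω ∈ A k} from hak)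
        omega
      · right
        rw [Set.not_nonempty_iff_eq_empty] at hne
        have h0 : sInf {k | ω ∈ A k} = 0 := by rw [hne]; exact Nat.sInf_empty
        have hn0 : n = 0 := by rw [← h, h0]
        simp only [hn0, if_true, mem_iInter, mem_compl_iff]
        intro k hk
        have : k ∈ {k | ω ∈ A k} := hk
        rw [hne] at this
        exact this
    · rintro (⟨han, hlt⟩ | hemp)
      · refine le_antisymm (Nat.sInf_le han) ?_
        by_contra hlt'
        push_neg at hlt'
        have hmem := Nat.sInf_mem (⟨n, han⟩ : {k | ω ∈ A k}.Nonempty)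
        exact hlt _ hlt' hmem
      · by_cases hn0 : n = 0
        · rw [if_pos hn0] at hemp
          simp only [mem_iInter, mem_compl_iff] at hemp
          have hne : {k | ω ∈ A k} = ∅ := by
            ext k; simp only [mem_setOf_eq, mem_empty_iff_false, iff_false]
            exact hemp k
          rw [hne, Nat.sInf_empty, hn0]
        · rw [if_neg hn0] at hemp
          exact absurd hemp (notMem_empty ω)
  rw [show (fun ω => sInf {n_1 | ω ∈ A n_1}) ⁻¹' {n} = (fun ω => sInf {k | ω ∈ A k}) ⁻¹' {n} from rfl, hset]
  refine MeasurableSet.union ((hA n).inter ?_) ?_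
  · exact MeasurableSet.biInter (Finset.range n).countable_toSet (fun k _ => (hA k).compl)
  · split
    · exact MeasurableSet.iInter fun k => (hA k).compl
    · exact MeasurableSet.empty

lemma crg_pathwise_conv (b : ℝ → ℝ) (t x₀ : ℝ) (g : ℕ → ℝ)
    (hne : {n : ℕ | b (t + n) < x₀ + g n}.Nonempty) :
    ∃ K : ℕ, ∀ k ≥ K, sInf {n : ℕ | b (t + n) ≤ (x₀ - 1/(k+1)) + g n}
      = sInf {n : ℕ | b (t + n) < x₀ + g n} := by
  set N := sInf {n : ℕ | b (t + n) < x₀ + g n} with hN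
  have hNmem : b (t + N) < x₀ + g N := Nat.sInf_mem hne
  have hgap : 0 < x₀ + g N - b (t + N) := by linarith
  obtain ⟨K, hK⟩ := exists_nat_one_div_lt hgap
  refine ⟨K, fun k hk => ?_⟩
  have hk1 : (0:ℝ) < 1/(k+1) := by positivity
  have hk2 : 1/((k:ℝ)+1) ≤ 1/((K:ℝ)+1) := by
    apply one_div_le_one_div_of_le (by positivity)
    have := (Nat.cast_le (α := ℝ)).2 hk; linarith
  have hNset : N ∈ {n : ℕ | b (t + n) ≤ (x₀ - 1/(k+1)) + g n} := by
    simp only [mem_setOf_eq]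
    have : 1/((k:ℝ)+1) < x₀ + g N - b (t + N) := lt_of_le_of_lt hk2 hK
    linarith
  refine le_antisymm (Nat.sInf_le hNset) ?_
  by_contra hlt
  push_neg at hlt
  have hmem := Nat.sInf_mem (⟨N, hNset⟩ : {n : ℕ | b (t + n) ≤ (x₀ - 1/(k+1)) + g n}.Nonempty)
  set m := sInf {n : ℕ | b (t + n) ≤ (x₀ - 1/(k+1)) + g n} with hm
  have hstrict : b (t + m) < x₀ + g m := by
    have : b (t + m) ≤ (x₀ - 1/(k+1)) + g m := hmem
    linarith
  exact absurd (Nat.sInf_le (show m ∈ {n : ℕ | b (t + n) < x₀ + g n} from hstrict)) (by omega)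

lemma crg_pathwise_mono (b : ℝ → ℝ) (t x₀ : ℝ) (g : ℕ → ℝ)
    (hne : {n : ℕ | b (t + n) < x₀ + g n}.Nonempty) :
    sInf {n : ℕ | b (t + n) ≤ x₀ + g n} ≤ sInf {n : ℕ | b (t + n) < x₀ + g n} :=
  csInf_le_csInf (OrderBot.bddBelow _) hne
    (fun n hn => by simp only [mem_setOf_eq] at *; linarith)

lemma crg_path_calc (b : ℝ → ℝ) (t x₀ : ℝ) (g : ℕ → ℝ) (n : ℕ)
    (hkn : ∀ k < n, x₀ + g k < b (t + k)) (hn : x₀ + g n = b (t + n))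
    (hne : {k : ℕ | b (t + k) < x₀ + g k}.Nonempty) :
    sInf {k : ℕ | b (t + k) ≤ x₀ + g k} = n ∧
    n + 1 ≤ sInf {k : ℕ | b (t + k) < x₀ + g k} := by
  constructor
  · have hmem : n ∈ {k : ℕ | b (t + k) ≤ x₀ + g k} := le_of_eq hn.symm
    refine le_antisymm (Nat.sInf_le hmem) ?_
    by_contra hlt
    push_neg at hlt
    have h := Nat.sInf_mem (⟨n, hmem⟩ : {k : ℕ | b (t + k) ≤ x₀ + g k}.Nonempty)
    have h2 := hkn _ hlt
    simp only [mem_setOf_eq] at h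
    linarith
  · have h := Nat.sInf_mem hne
    simp only [mem_setOf_eq] at h
    by_contra hle
    push_neg at hle
    -- hle : sInf strict < n + 1, i.e. sInf strict ≤ n
    set m := sInf {k : ℕ | b (t + k) < x₀ + g k} with hm
    have hmn : m ≤ n := by omega
    rcases lt_or_eq_of_le hmn with hlt | heq
    · have := hkn m hlt
      linarith
    · rw [heq] at h
      linarith

/-- The set of achievable values in the Chow-Robbins game. -/
def crgSet (P : Measure Ω) (X : ℕ → Ω → ℝ) (F : Filtration ℕ ‹MeasurableSpace Ω›)
    (t x : ℝ) : Set ℝ :=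
  {v : ℝ | ∃ τ : Ω → ℕ, IsStoppingTime F (fun ω => ((τ ω : ℕ) : WithTop ℕ)) ∧
    Integrable (fun ω => (x + X (τ ω) ω) / (t + τ ω)) P ∧
    v = ∫ ω, (x + X (τ ω) ω) / (t + τ ω) ∂P}



variable (P : Measure Ω) [IsProbabilityMeasure P]

lemma crg_ae_pm (ξ : ℕ → Ω → ℝ) (hξmeas : ∀ i, Measurable (ξ i))
    (hξ₁ : ∀ i, P {ω | ξ i ω = -1} = 1/2) (hξ₂ : ∀ i, P {ω | ξ i ω = 1} = 1/2) :
    ∀ᵐ ω ∂P, ∀ i, ξ i ω = -1 ∨ ξ i ω = 1 := by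
  rw [ae_all_iff]
  intro i
  have hm1 : MeasurableSet {ω | ξ i ω = -1} := (hξmeas i) (measurableSet_singleton (-1))
  have hm2 : MeasurableSet {ω | ξ i ω = 1} := (hξmeas i) (measurableSet_singleton (1:ℝ))
  have hdisj : Disjoint {ω | ξ i ω = -1} {ω | ξ i ω = 1} := by
    rw [Set.disjoint_left]; intro ω h1 h2
    simp only [mem_setOf_eq] at h1 h2; rw [h1] at h2; norm_num at h2
  have hunion : P ({ω | ξ i ω = -1} ∪ {ω | ξ i ω = 1}) = 1 := by
    rw [measure_union hdisj hm2, hξ₁ i, hξ₂ i]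
    norm_num
    exact ENNReal.inv_two_add_inv_two
  have : P ({ω | ξ i ω = -1} ∪ {ω | ξ i ω = 1})ᶜ = 0 := by
    rw [prob_compl_eq_zero_iff (hm1.union hm2)]; exact hunion
  filter_upwards [measure_eq_zero_iff_ae_notMem.mp this] with ω h
  simpa [mem_union, mem_setOf_eq, not_or] using not_not.mp (fun hn => h (by simpa using hn))

lemma crg_Xmeas (ξ : ℕ → Ω → ℝ) (hξmeas : ∀ i, Measurable (ξ i))
    (X : ℕ → Ω → ℝ) (hX : ∀ n ω, X n ω = ∑ i ∈ Finset.range n, ξ i ω) :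
    ∀ n, Measurable (X n) := by
  intro n
  have : X n = fun ω => ∑ i ∈ Finset.range n, ξ i ω := funext (hX n)
  rw [this]
  exact Finset.measurable_sum _ (fun i _ => hξmeas i)

lemma crg_Xbdd (ξ : ℕ → Ω → ℝ)
    (X : ℕ → Ω → ℝ) (hX : ∀ n ω, X n ω = ∑ i ∈ Finset.range n, ξ i ω)
    (hae : ∀ᵐ ω ∂P, ∀ i, ξ i ω = -1 ∨ ξ i ω = 1) :
    ∀ᵐ ω ∂P, ∀ n, |X n ω| ≤ (n:ℝ) := by
  filter_upwards [hae] with ω h n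
  rw [hX n ω]
  calc |∑ i ∈ Finset.range n, ξ i ω| ≤ ∑ i ∈ Finset.range n, |ξ i ω| :=
        Finset.abs_sum_le_sum_abs _ _
    _ ≤ ∑ _i ∈ Finset.range n, (1:ℝ) := by
        refine Finset.sum_le_sum fun i _ => ?_
        rcases h i with h' | h' <;> rw [h'] <;> norm_num
    _ = n := by simp

lemma crg_xi_int (ξ : ℕ → Ω → ℝ) (hξmeas : ∀ i, Measurable (ξ i))
    (hae : ∀ᵐ ω ∂P, ∀ i, ξ i ω = -1 ∨ ξ i ω = 1) (i : ℕ) :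
    Integrable (ξ i) P := by
  refine Integrable.mono' (integrable_const (1:ℝ)) (hξmeas i).aestronglyMeasurable ?_
  filter_upwards [hae] with ω h
  rcases h i with h' | h' <;> rw [h'] <;> norm_num

lemma crg_Exi (ξ : ℕ → Ω → ℝ) (hξmeas : ∀ i, Measurable (ξ i))
    (hξ₁ : ∀ i, P {ω | ξ i ω = -1} = 1/2) (hξ₂ : ∀ i, P {ω | ξ i ω = 1} = 1/2)
    (i : ℕ) : ∫ ω, ξ i ω ∂P = 0 := by
  have hae := crg_ae_pm P ξ hξmeas hξ₁ hξ₂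
  have hm1 : MeasurableSet {ω | ξ i ω = -1} := (hξmeas i) (measurableSet_singleton (-1))
  have hm2 : MeasurableSet {ω | ξ i ω = 1} := (hξmeas i) (measurableSet_singleton (1:ℝ))
  have heq : ξ i =ᵐ[P] fun ω => Set.indicator {ω | ξ i ω = 1} (fun _ => (1:ℝ)) ω
      - Set.indicator {ω | ξ i ω = -1} (fun _ => (1:ℝ)) ω := by
    filter_upwards [hae] with ω h
    rcases h i with h' | h'
    · have h1 : ω ∉ {ω | ξ i ω = 1} := by simp [mem_setOf_eq, h']; norm_num
      have h2 : ω ∈ {ω | ξ i ω = -1} := h'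
      simp [Set.indicator_of_notMem h1, Set.indicator_of_mem h2, h']
    · have h1 : ω ∈ {ω | ξ i ω = 1} := h'
      have h2 : ω ∉ {ω | ξ i ω = -1} := by simp [mem_setOf_eq, h']; norm_num
      simp [Set.indicator_of_mem h1, Set.indicator_of_notMem h2, h']
  rw [integral_congr_ae heq, integral_sub, integral_indicator_const _ hm2,
    integral_indicator_const _ hm1, measureReal_def, measureReal_def, hξ₁ i, hξ₂ i]
  · norm_num
  · exact (integrable_indicator_iff hm2).2 (integrableOn_const (measure_ne_top _ _))
  · exact (integrable_indicator_iff hm1).2 (integrableOn_const (measure_ne_top _ _))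

lemma crg_EX (ξ : ℕ → Ω → ℝ) (hξmeas : ∀ i, Measurable (ξ i))
    (hξ₁ : ∀ i, P {ω | ξ i ω = -1} = 1/2) (hξ₂ : ∀ i, P {ω | ξ i ω = 1} = 1/2)
    (X : ℕ → Ω → ℝ) (hX : ∀ n ω, X n ω = ∑ i ∈ Finset.range n, ξ i ω)
    (n : ℕ) : Integrable (X n) P ∧ ∫ ω, X n ω ∂P = 0 := by
  have hae := crg_ae_pm P ξ hξmeas hξ₁ hξ₂
  have hXe : X n = fun ω => ∑ i ∈ Finset.range n, ξ i ω := funext (hX n)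
  constructor
  · rw [hXe]; exact integrable_finset_sum _ (fun i _ => crg_xi_int P ξ hξmeas hae i)
  · rw [hXe, integral_finset_sum _ (fun i _ => crg_xi_int P ξ hξmeas hae i)]
    exact Finset.sum_eq_zero fun i _ => crg_Exi P ξ hξmeas hξ₁ hξ₂ i

lemma crg_stop_meas (F : Filtration ℕ ‹MeasurableSpace Ω›) (τ : Ω → ℕ)
    (hτ : IsStoppingTime F (fun ω => ((τ ω : ℕ) : WithTop ℕ))) : Measurable τ := by
  refine measurable_to_countable' fun n => ?_
  have := (hτ.measurableSet_eq n)
  have h : τ ⁻¹' {n} = {ω | ((τ ω : ℕ) : WithTop ℕ) = n} := by ext; simp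
  rw [h]
  exact F.le n _ this

lemma crg_integrand_meas (X : ℕ → Ω → ℝ) (hXmeas : ∀ n, Measurable (X n))
    (s x : ℝ) (τ : Ω → ℕ) (hτ : Measurable τ) :
    Measurable (fun ω => (x + X (τ ω) ω) / (s + τ ω)) := by
  have hU : Measurable (fun p : Ω × ℕ => (x + X p.2 p.1) / (s + p.2)) := by
    refine measurable_from_prod_countable_left fun n => ?_
    simp only
    exact ((measurable_const.add (hXmeas n)).div_const _)
  exact hU.comp (measurable_id.prodMk hτ)

lemma crg_oneover (s : ℝ) (hs : 0 < s) (τ : Ω → ℕ) (hτ : Measurable τ) :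
    Integrable (fun ω => 1 / (s + (τ ω : ℝ))) P ∧
    0 ≤ (∫ ω, 1 / (s + (τ ω : ℝ)) ∂P) ∧ (∫ ω, 1 / (s + (τ ω : ℝ)) ∂P) ≤ 1 / s := by
  have hpos : ∀ n : ℕ, (0:ℝ) < s + n := fun n => by positivity
  have hmeas : Measurable (fun ω => 1 / (s + (τ ω : ℝ))) :=
    (measurable_from_top (f := fun n : ℕ => 1 / (s + (n:ℝ)))).comp hτ
  have hbd : ∀ ω, ‖1 / (s + (τ ω : ℝ))‖ ≤ 1 / s := by
    intro ω
    rw [Real.norm_eq_abs, abs_of_pos (by positivity)]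
    exact one_div_le_one_div_of_le hs (by simp [le_add_iff_nonneg_right, Nat.cast_nonneg])
  have hint : Integrable (fun ω => 1 / (s + (τ ω : ℝ))) P :=
    Integrable.mono' (integrable_const _) hmeas.aestronglyMeasurable (Eventually.of_forall hbd)
  refine ⟨hint, integral_nonneg fun ω => by positivity, ?_⟩
  calc ∫ ω, 1 / (s + (τ ω : ℝ)) ∂P ≤ ∫ _ω, 1 / s ∂P := by
        refine integral_mono hint (integrable_const _) fun ω => ?_
        have := hbd ω
        rwa [Real.norm_eq_abs, abs_of_pos (by positivity)] at this
    _ = 1 / s := by simp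

lemma crg_transport (X : ℕ → Ω → ℝ) (s x : ℝ) (hs : 0 < s) (τ : Ω → ℕ) (hτ : Measurable τ)
    (hint : Integrable (fun ω => (x + X (τ ω) ω) / (s + τ ω)) P) (y : ℝ) :
    Integrable (fun ω => (y + X (τ ω) ω) / (s + τ ω)) P ∧
    ∫ ω, (y + X (τ ω) ω) / (s + τ ω) ∂P
      = (∫ ω, (x + X (τ ω) ω) / (s + τ ω) ∂P) + (y - x) * ∫ ω, 1 / (s + (τ ω : ℝ)) ∂P := by
  obtain ⟨hint1, -, -⟩ := crg_oneover P s hs τ hτ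
  have hkey : (fun ω => (y + X (τ ω) ω) / (s + τ ω))
      = fun ω => (x + X (τ ω) ω) / (s + τ ω) + (y - x) * (1 / (s + (τ ω : ℝ))) := by
    funext ω
    have h0 : (s + (τ ω : ℝ)) ≠ 0 := by positivity
    field_simp
    ring
  constructor
  · rw [hkey]; exact hint.add (hint1.const_mul _)
  · rw [hkey, integral_add hint (hint1.const_mul _), integral_const_mul]

lemma crg_bddAbove (X : ℕ → Ω → ℝ) (hXmeas : ∀ n, Measurable (X n))
    (hXbdd : ∀ᵐ ω ∂P, ∀ n, |X n ω| ≤ (n:ℝ))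
    (F : Filtration ℕ ‹MeasurableSpace Ω›) (s x : ℝ) (hs : 0 < s) :
    (∀ v ∈ crgSet P X F s x, v ≤ |x| / s + 1) ∧ BddAbove (crgSet P X F s x) := by
  have key : ∀ v ∈ crgSet P X F s x, v ≤ |x| / s + 1 := by
    rintro v ⟨τ, hstop, hint, rfl⟩
    calc ∫ ω, (x + X (τ ω) ω) / (s + τ ω) ∂P ≤ ∫ _ω, (|x| / s + 1) ∂P := by
          refine integral_mono_ae hint (integrable_const _) ?_
          filter_upwards [hXbdd] with ω hbd
          have hτp : (0:ℝ) < s + τ ω := by positivity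
          have h1 : x + X (τ ω) ω ≤ |x| + τ ω :=
            add_le_add (le_abs_self x) ((abs_le.1 (hbd (τ ω))).2)
          calc (x + X (τ ω) ω) / (s + τ ω) ≤ (|x| + τ ω) / (s + τ ω) := by
                gcongr
            _ ≤ |x| / s + 1 := by
                rw [div_le_iff₀ hτp]
                have h2 : (0:ℝ) ≤ τ ω := Nat.cast_nonneg _
                have h3 : |x| / s * s = |x| := by field_simp
                have h4 : (0:ℝ) ≤ |x| / s := by positivity
                nlinarith [abs_nonneg x]
      _ = |x| / s + 1 := by simp
  exact ⟨key, ⟨|x| / s + 1, fun v hv => key v hv⟩⟩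

lemma crg_event_prob (ξ : ℕ → Ω → ℝ)
    (hξindep : iIndepFun ξ P)
    (hξ₁ : ∀ i, P {ω | ξ i ω = -1} = 1/2) (hξ₂ : ∀ i, P {ω | ξ i ω = 1} = 1/2)
    (e : ℕ → ℝ) (he : ∀ i, e i = -1 ∨ e i = 1) (n : ℕ) :
    P (⋂ i ∈ Finset.range n, {ω | ξ i ω = e i}) = (1/2 : ENNReal)^n := by
  have hmeas : ∀ i, i ∈ Finset.range n →
      MeasurableSet[(Real.measurableSpace).comap (ξ i)] {ω | ξ i ω = e i} := by
    intro i _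
    exact ⟨{e i}, measurableSet_singleton _, by ext ω; simp [Set.mem_preimage]⟩
  rw [hξindep.meas_biInter hmeas]
  have : ∀ i ∈ Finset.range n, P {ω | ξ i ω = e i} = (1/2 : ENNReal) := by
    intro i _
    rcases he i with h | h <;> rw [h]
    · exact hξ₁ i
    · exact hξ₂ i
  rw [Finset.prod_congr rfl this, Finset.prod_const, Finset.card_range]

-- test defeq with hV statement form
example (X : ℕ → Ω → ℝ) (F : Filtration ℕ ‹MeasurableSpace Ω›) (V : ℝ → ℝ → ℝ)
    (hV : ∀ t : ℝ, 0 < t → ∀ x : ℝ, V t x =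
      sSup {v : ℝ | ∃ τ : Ω → ℕ, IsStoppingTime F (fun ω => ((τ ω : ℕ) : WithTop ℕ)) ∧
        Integrable (fun ω => (x + X (τ ω) ω) / (t + τ ω)) P ∧
        v = ∫ ω, (x + X (τ ω) ω) / (t + τ ω) ∂P})
    (t x : ℝ) (ht : 0 < t) : V t x = sSup (crgSet P X F t x) := hV t ht x

-- the constant-0 stopping time member
lemma crg_zero_mem (X : ℕ → Ω → ℝ) (hX0 : ∀ ω, X 0 ω = 0)
    (F : Filtration ℕ ‹MeasurableSpace Ω›) (s x : ℝ) (hs : 0 < s) :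
    x / s ∈ crgSet P X F s x := by
  refine ⟨fun _ => 0, isStoppingTime_const F 0, ?_, ?_⟩
  · have : (fun ω => (x + X 0 ω) / (s + (0:ℕ))) = fun _ω => x / s := by
      funext ω; rw [hX0 ω]; norm_num
    rw [this]; exact integrable_const _
  · have : (fun ω => (x + X 0 ω) / (s + (0:ℕ))) = fun _ω => x / s := by
      funext ω; rw [hX0 ω]; norm_num
    rw [this]; simp

-- the constant-n stopping time member (uses E X n = 0)
lemma crg_const_mem (X : ℕ → Ω → ℝ) (hXmeas : ∀ n, Measurable (X n))
    (hXbdd : ∀ᵐ ω ∂P, ∀ n, |X n ω| ≤ (n:ℝ))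
    (hEX : ∀ n, Integrable (X n) P ∧ ∫ ω, X n ω ∂P = 0)
    (F : Filtration ℕ ‹MeasurableSpace Ω›) (s x : ℝ) (hs : 0 < s) (n : ℕ) :
    x / (s + n) ∈ crgSet P X F s x := by
  refine ⟨fun _ => n, isStoppingTime_const F n, ?_, ?_⟩
  · have : (fun ω => (x + X n ω) / (s + (n:ℕ))) = fun ω => (x + X n ω) / (s + (n:ℝ)) := rfl
    refine Integrable.div_const ?_ _
    exact (integrable_const x).add (hEX n).1
  · rw [integral_div, integral_add (integrable_const x) (hEX n).1, (hEX n).2, integral_const]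
    simp

lemma crg_bddAbove' (X : ℕ → Ω → ℝ) (hXmeas : ∀ n, Measurable (X n))
    (hXbdd : ∀ᵐ ω ∂P, ∀ n, |X n ω| ≤ (n:ℝ))
    (F : Filtration ℕ ‹MeasurableSpace Ω›) (s x : ℝ) (hs : 0 < s) :
    BddAbove (crgSet P X F s x) := (crg_bddAbove P X hXmeas hXbdd F s x hs).2

lemma crg_stop_meas' (F : Filtration ℕ ‹MeasurableSpace Ω›) (τ : Ω → ℕ)
    (hτ : IsStoppingTime F (fun ω => ((τ ω : ℕ) : WithTop ℕ))) : Measurable τ := crg_stop_meas F τ hτ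

lemma crg_transport' (X : ℕ → Ω → ℝ) (s x : ℝ) (hs : 0 < s) (τ : Ω → ℕ) (hτ : Measurable τ)
    (hint : Integrable (fun ω => (x + X (τ ω) ω) / (s + τ ω)) P) (y : ℝ) :
    Integrable (fun ω => (y + X (τ ω) ω) / (s + τ ω)) P ∧
    ∫ ω, (y + X (τ ω) ω) / (s + τ ω) ∂P
      = (∫ ω, (x + X (τ ω) ω) / (s + τ ω) ∂P) + (y - x) * ∫ ω, 1 / (s + (τ ω : ℝ)) ∂P :=
  crg_transport P X s x hs τ hτ hint y

lemma crg_oneover' (s : ℝ) (hs : 0 < s) (τ : Ω → ℕ) (hτ : Measurable τ) :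
    Integrable (fun ω => 1 / (s + (τ ω : ℝ))) P ∧
    0 ≤ (∫ ω, 1 / (s + (τ ω : ℝ)) ∂P) ∧ (∫ ω, 1 / (s + (τ ω : ℝ)) ∂P) ≤ 1 / s :=
  crg_oneover P s hs τ hτ

-- membership transport between levels
lemma crg_mem_transport (X : ℕ → Ω → ℝ) (F : Filtration ℕ ‹MeasurableSpace Ω›)
    (s x : ℝ) (hs : 0 < s) (v : ℝ) (hv : v ∈ crgSet P X F s x) (y : ℝ) :
    ∃ τ : Ω → ℕ, Measurable τ ∧
      v + (y - x) * (∫ ω, 1 / (s + (τ ω : ℝ)) ∂P) ∈ crgSet P X F s y ∧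
      Integrable (fun ω => (x + X (τ ω) ω) / (s + τ ω)) P ∧
      v = ∫ ω, (x + X (τ ω) ω) / (s + τ ω) ∂P ∧ IsStoppingTime F (fun ω => ((τ ω : ℕ) : WithTop ℕ)) := by
  obtain ⟨τ, hstop, hint, rfl⟩ := hv
  have hτm := crg_stop_meas' F τ hstop
  obtain ⟨hint2, heq⟩ := crg_transport' P X s x hs τ hτm hint y
  exact ⟨τ, hτm, ⟨τ, hstop, hint2, heq.symm⟩, hint, rfl, hstop⟩

-- the Lipschitz estimate
lemma crg_lip (X : ℕ → Ω → ℝ) (hXmeas : ∀ n, Measurable (X n))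
    (hXbdd : ∀ᵐ ω ∂P, ∀ n, |X n ω| ≤ (n:ℝ))
    (F : Filtration ℕ ‹MeasurableSpace Ω›) (V : ℝ → ℝ → ℝ) (s : ℝ) (hs : 0 < s)
    (hVs : ∀ z : ℝ, V s z = sSup (crgSet P X F s z))
    (hne : ∀ z : ℝ, (crgSet P X F s z).Nonempty)
    (x y : ℝ) : V s x ≤ V s y + |y - x| / s := by
  rw [hVs x]
  refine csSup_le (hne x) fun v hv => ?_
  obtain ⟨τ, hτm, hmem, -, -, -⟩ := crg_mem_transport P X F s x hs v hv y
  have hle : v + (y - x) * (∫ ω, 1 / (s + (τ ω : ℝ)) ∂P) ≤ V s y := by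
    rw [hVs y]
    exact le_csSup (crg_bddAbove' P X hXmeas hXbdd F s y hs) hmem
  obtain ⟨-, h0, h1⟩ := crg_oneover' P s hs τ hτm
  have habs : |(y - x) * (∫ ω, 1 / (s + (τ ω : ℝ)) ∂P)| ≤ |y - x| / s := by
    rw [abs_mul, abs_of_nonneg h0]
    calc |y - x| * (∫ ω, 1 / (s + (τ ω : ℝ)) ∂P) ≤ |y - x| * (1/s) :=
          mul_le_mul_of_nonneg_left h1 (abs_nonneg _)
      _ = |y - x| / s := by ring
  nlinarith [neg_abs_le ((y - x) * (∫ ω, 1 / (s + (τ ω : ℝ)) ∂P)), habs]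

-- affine minorants from optimal stopping times
lemma crg_minorant (X : ℕ → Ω → ℝ) (hXmeas : ∀ n, Measurable (X n))
    (hXbdd : ∀ᵐ ω ∂P, ∀ n, |X n ω| ≤ (n:ℝ))
    (F : Filtration ℕ ‹MeasurableSpace Ω›) (V : ℝ → ℝ → ℝ) (s : ℝ) (hs : 0 < s)
    (hVs : ∀ z : ℝ, V s z = sSup (crgSet P X F s z))
    (x : ℝ) (τ : Ω → ℕ) (hτm : Measurable τ) (hstop : IsStoppingTime F (fun ω => ((τ ω : ℕ) : WithTop ℕ)))
    (hint : Integrable (fun ω => (x + X (τ ω) ω) / (s + τ ω)) P)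
    (hopt : V s x = ∫ ω, (x + X (τ ω) ω) / (s + τ ω) ∂P) (y : ℝ) :
    V s x + (y - x) * (∫ ω, 1 / (s + (τ ω : ℝ)) ∂P) ≤ V s y := by
  obtain ⟨hint2, heq⟩ := crg_transport' P X s x hs τ hτm hint y
  have hmem : V s x + (y - x) * (∫ ω, 1 / (s + (τ ω : ℝ)) ∂P) ∈ crgSet P X F s y := by
    refine ⟨τ, hstop, hint2, ?_⟩
    rw [heq, hopt]
  rw [hVs y]
  exact le_csSup (crg_bddAbove' P X hXmeas hXbdd F s y hs) hmem

lemma crg_lower (X : ℕ → Ω → ℝ) (hXmeas : ∀ n, Measurable (X n))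
    (hXbdd : ∀ᵐ ω ∂P, ∀ n, |X n ω| ≤ (n:ℝ)) (hX0 : ∀ ω, X 0 ω = 0)
    (F : Filtration ℕ ‹MeasurableSpace Ω›) (V : ℝ → ℝ → ℝ) (s : ℝ) (hs : 0 < s)
    (hVs : ∀ z : ℝ, V s z = sSup (crgSet P X F s z)) (x : ℝ) :
    x / s ≤ V s x := by
  rw [hVs x]
  exact le_csSup (crg_bddAbove' P X hXmeas hXbdd F s x hs) (crg_zero_mem P X hX0 F s x hs)

lemma crg_upper (X : ℕ → Ω → ℝ) (hXmeas : ∀ n, Measurable (X n))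
    (hXbdd : ∀ᵐ ω ∂P, ∀ n, |X n ω| ≤ (n:ℝ)) (hX0 : ∀ ω, X 0 ω = 0)
    (F : Filtration ℕ ‹MeasurableSpace Ω›) (V : ℝ → ℝ → ℝ) (s : ℝ) (hs : 0 < s)
    (hVs : ∀ z : ℝ, V s z = sSup (crgSet P X F s z)) (x : ℝ) (hx : s ≤ x) :
    V s x = x / s := by
  have hup : V s x ≤ x / s := by
    rw [hVs x]
    refine csSup_le ⟨x/s, crg_zero_mem P X hX0 F s x hs⟩ ?_
    rintro v ⟨τ, hstop, hint, rfl⟩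
    calc ∫ ω, (x + X (τ ω) ω) / (s + τ ω) ∂P ≤ ∫ _ω, x / s ∂P := by
          refine integral_mono_ae hint (integrable_const _) ?_
          filter_upwards [hXbdd] with ω hbd
          have hτp : (0:ℝ) < s + τ ω := by positivity
          rw [div_le_div_iff₀ hτp hs]
          have h1 : X (τ ω) ω ≤ (τ ω : ℝ) := (abs_le.1 (hbd (τ ω))).2
          have h2 : (0:ℝ) ≤ τ ω := Nat.cast_nonneg _
          nlinarith
      _ = x / s := by simp
  exact le_antisymm hup (crg_lower P X hXmeas hXbdd hX0 F V s hs hVs x)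

lemma crg_antitone_false (X : ℕ → Ω → ℝ) (hXmeas : ∀ n, Measurable (X n))
    (hXbdd : ∀ᵐ ω ∂P, ∀ n, |X n ω| ≤ (n:ℝ)) (hX0 : ∀ ω, X 0 ω = 0)
    (hEX : ∀ n, Integrable (X n) P ∧ ∫ ω, X n ω ∂P = 0)
    (F : Filtration ℕ ‹MeasurableSpace Ω›) (V : ℝ → ℝ → ℝ)
    (hVs : ∀ s : ℝ, 0 < s → ∀ z : ℝ, V s z = sSup (crgSet P X F s z))
    (b : ℝ → ℝ) (hD : ∀ t : ℝ, 0 < t → ∀ x : ℝ, (V t x = x / t ↔ b t ≤ x))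
    (hanti : Antitone b)
    (hunbdd : ¬ ∃ M : ℝ, ∀ t : ℝ, 0 < t → |b t| ≤ M) : False := by
  -- b s ≤ s for all s > 0
  have hbs : ∀ s : ℝ, 0 < s → b s ≤ s := by
    intro s hs
    have := crg_upper P X hXmeas hXbdd hX0 F V s hs (hVs s hs) s le_rfl
    exact (hD s hs s).1 this
  -- b s ≤ 0 for all s > 0
  have hb0 : ∀ s : ℝ, 0 < s → b s ≤ 0 := by
    intro s hs
    by_contra hpos
    push_neg at hpos
    set ε := min s (b s / 2) with hε
    have hεpos : 0 < ε := lt_min hs (by linarith)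
    have h1 : b s ≤ b ε := hanti (min_le_left _ _)
    have h2 : b ε ≤ ε := hbs ε hεpos
    have h3 : ε ≤ b s / 2 := min_le_right _ _
    linarith
  -- some s > 0 with b s < -1
  push_neg at hunbdd
  obtain ⟨s, hs, habs⟩ := hunbdd 1
  have hneg : b s < -1 := by
    have h0 := hb0 s hs
    rw [abs_of_nonpos h0] at habs
    linarith
  set x := b s with hx
  have hVx : V s x = x / s := (hD s hs x).2 le_rfl
  have hmem : x / (s + 1) ∈ crgSet P X F s x := by
    have := crg_const_mem P X hXmeas hXbdd hEX F s x hs 1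
    simpa using this
  have hle : x / (s + 1) ≤ V s x :=
    (hVs s hs x) ▸ le_csSup (crg_bddAbove' P X hXmeas hXbdd F s x hs) hmem
  rw [hVx] at hle
  have hxneg : x < 0 := by linarith
  have : x / s < x / (s + 1) := by
    rw [div_lt_div_iff₀ hs (by linarith)]
    nlinarith
  linarith


lemma crg_kink (ξ : ℕ → Ω → ℝ) (hξmeas : ∀ i, Measurable (ξ i))
    (hξindep : iIndepFun ξ P)
    (hξ₁ : ∀ i, P {ω | ξ i ω = -1} = 1/2) (hξ₂ : ∀ i, P {ω | ξ i ω = 1} = 1/2)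
    (X : ℕ → Ω → ℝ) (hX : ∀ n ω, X n ω = ∑ i ∈ Finset.range n, ξ i ω)
    (F : Filtration ℕ ‹MeasurableSpace Ω›) (V : ℝ → ℝ → ℝ)
    (b : ℝ → ℝ)
    (τs : ℝ → ℝ → Ω → ℕ)
    (hτs : ∀ t x : ℝ, ∀ ω, τs t x ω = sInf {n : ℕ | b (t + n) ≤ x + X n ω})
    (hτstop : ∀ t x : ℝ, IsStoppingTime F (fun ω => ((τs t x ω : ℕ) : WithTop ℕ)))
    (hτfin : ∀ t : ℝ, 0 < t → ∀ x : ℝ, ∀ᵐ ω ∂P, ∃ n : ℕ, b (t + n) ≤ x + X n ω)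
    (hsolve : ∀ t : ℝ, 0 < t → ∀ x : ℝ,
      Integrable (fun ω => (x + X (τs t x ω) ω) / (t + τs t x ω)) P ∧
      V t x = ∫ ω, (x + X (τs t x ω) ω) / (t + τs t x ω) ∂P)
    (t : ℝ) (ht : 0 < t)
    (hVs : ∀ z : ℝ, V t z = sSup (crgSet P X F t z))
    (n m : ℕ) (hmn : m < n) (x₀ : ℝ)
    (hA : ∀ k : ℕ, k < n → x₀ + (if k ≤ m then -(k:ℝ) else (k:ℝ) - 2*(m:ℝ)) < b (t + k))
    (hB : x₀ + ((n:ℝ) - 2*(m:ℝ)) = b (t + n)) :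
    ¬ DifferentiableAt ℝ (fun y => V t y) x₀ := by
  classical
  have hae := crg_ae_pm P ξ hξmeas hξ₁ hξ₂
  have hXmeas := crg_Xmeas ξ hξmeas X hX
  have hXbdd := crg_Xbdd P ξ X hX hae
  have hne : ∀ z : ℝ, (crgSet P X F t z).Nonempty :=
    fun z => ⟨_, τs t z, hτstop t z, (hsolve t ht z).1, rfl⟩
  set τ : Ω → ℕ := τs t x₀ with hτdef
  have hτm : Measurable τ := crg_stop_meas F τ (hτstop t x₀)
  set Lp : ℝ := ∫ ω, 1 / (t + (τ ω : ℝ)) ∂P with hLpdef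
  set τm : Ω → ℕ := fun ω => sInf {k : ℕ | b (t + k) < x₀ + X k ω} with hτmdef
  have hτmm : Measurable τm := by
    apply measurable_sInf_nat (A := fun k => {ω | b (t + k) < x₀ + X k ω})
    intro k
    exact measurableSet_lt measurable_const (measurable_const.add (hXmeas k))
  set Lm : ℝ := ∫ ω, 1 / (t + (τm ω : ℝ)) ∂P with hLmdef
  have hGne : ∀ᵐ ω ∂P, {k : ℕ | b (t + k) < x₀ + X k ω}.Nonempty := by
    filter_upwards [hτfin t ht (x₀ - 1)] with ω hω
    obtain ⟨k, hk⟩ := hω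
    exact ⟨k, by simp only [mem_setOf_eq]; linarith⟩
  -- upper minorant
  have hMp : ∀ y : ℝ, V t x₀ + (y - x₀) * Lp ≤ V t y := fun y =>
    crg_minorant P X hXmeas hXbdd F V t ht hVs x₀ τ hτm (hτstop t x₀)
      (hsolve t ht x₀).1 (hsolve t ht x₀).2 y
  -- lower minorant, via the limit x ↑ x₀
  have hMm : ∀ y : ℝ, V t x₀ + (y - x₀) * Lm ≤ V t y := by
    have hLconv : Tendsto (fun k : ℕ => ∫ ω, 1 / (t + ((τs t (x₀ - 1/((k:ℝ)+1)) ω : ℕ) : ℝ)) ∂P)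
        atTop (nhds Lm) := by
      refine tendsto_integral_of_dominated_convergence (fun _ => 1/t) ?_ (integrable_const _) ?_ ?_
      · intro k
        exact ((measurable_from_top (f := fun j : ℕ => 1 / (t + (j:ℝ)))).comp
          (crg_stop_meas F _ (hτstop t _))).aestronglyMeasurable
      · intro k
        refine Eventually.of_forall fun ω => ?_
        have h0 : (0:ℝ) < t + (τs t (x₀ - 1/((k:ℝ)+1)) ω : ℝ) := by positivity
        rw [Real.norm_eq_abs, abs_of_pos (by positivity)]
        exact one_div_le_one_div_of_le ht (by simp [le_add_iff_nonneg_right, Nat.cast_nonneg])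
      · filter_upwards [hGne] with ω hne'
        obtain ⟨K, hK⟩ := crg_pathwise_conv b t x₀ (fun k => X k ω) hne'
        refine Tendsto.congr' ?_ tendsto_const_nhds
        rw [Filter.EventuallyEq, eventually_atTop]
        refine ⟨K, fun k hk => ?_⟩
        rw [hτs t (x₀ - 1/((k:ℝ)+1)) ω, hK k hk]
    intro y
    have hstep : ∀ k : ℕ, V t (x₀ - 1/((k:ℝ)+1))
        + (y - (x₀ - 1/((k:ℝ)+1))) * (∫ ω, 1 / (t + ((τs t (x₀ - 1/((k:ℝ)+1)) ω : ℕ) : ℝ)) ∂P)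
        ≤ V t y := fun k =>
      crg_minorant P X hXmeas hXbdd F V t ht hVs (x₀ - 1/((k:ℝ)+1)) _
        (crg_stop_meas F _ (hτstop t _)) (hτstop t _)
        (hsolve t ht _).1 (hsolve t ht _).2 y
    have hVconv : Tendsto (fun k : ℕ => V t (x₀ - 1/((k:ℝ)+1))) atTop (nhds (V t x₀)) := by
      rw [tendsto_iff_dist_tendsto_zero]
      have hb1 : ∀ k : ℕ, dist (V t (x₀ - 1/((k:ℝ)+1))) (V t x₀) ≤ (1/((k:ℝ)+1)) / t := by
        intro k
        have hd1 := crg_lip P X hXmeas hXbdd F V t ht hVs hne (x₀ - 1/((k:ℝ)+1)) x₀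
        have hd2 := crg_lip P X hXmeas hXbdd F V t ht hVs hne x₀ (x₀ - 1/((k:ℝ)+1))
        have habs1 : |x₀ - (x₀ - 1/((k:ℝ)+1))| = 1/((k:ℝ)+1) := by
          rw [show x₀ - (x₀ - 1/((k:ℝ)+1)) = 1/((k:ℝ)+1) by ring]
          exact abs_of_pos (by positivity)
        have habs2 : |x₀ - 1/((k:ℝ)+1) - x₀| = 1/((k:ℝ)+1) := by
          rw [abs_sub_comm]
          exact habs1
        rw [habs1] at hd1
        rw [habs2] at hd2
        rw [Real.dist_eq, abs_le]
        constructor <;> [linarith; linarith]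
      refine squeeze_zero (fun k => dist_nonneg) hb1 ?_
      have := tendsto_one_div_add_atTop_nhds_zero_nat (𝕜 := ℝ)
      have h2 := this.div_const t
      simpa using h2
    have hxkconv : Tendsto (fun k : ℕ => x₀ - 1/((k:ℝ)+1)) atTop (nhds x₀) := by
      have h2 := tendsto_one_div_add_atTop_nhds_zero_nat (𝕜 := ℝ)
      have h3 := (tendsto_const_nhds : Tendsto (fun _ : ℕ => x₀) atTop (nhds x₀)).sub h2
      simpa using h3
    have hLHS : Tendsto (fun k : ℕ => V t (x₀ - 1/((k:ℝ)+1))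
        + (y - (x₀ - 1/((k:ℝ)+1))) * (∫ ω, 1 / (t + ((τs t (x₀ - 1/((k:ℝ)+1)) ω : ℕ) : ℝ)) ∂P))
        atTop (nhds (V t x₀ + (y - x₀) * Lm)) :=
      hVconv.add (((tendsto_const_nhds : Tendsto (fun _ : ℕ => y) atTop (nhds y)).sub
        hxkconv).mul hLconv)
    exact le_of_tendsto hLHS (Eventually.of_forall hstep)
  -- strict inequality between the slopes
  have hstrict : Lm < Lp := by
    set e : ℕ → ℝ := fun i => if i < m then (-1:ℝ) else 1 with hedef
    have he : ∀ i, e i = -1 ∨ e i = 1 := by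
      intro i; by_cases h : i < m <;> simp [hedef, h]
    set A : Set Ω := ⋂ i ∈ Finset.range n, {ω | ξ i ω = e i} with hAdef
    have hAmeas : MeasurableSet A :=
      MeasurableSet.biInter (Finset.range n).countable_toSet
        (fun i _ => (hξmeas i) (measurableSet_singleton (e i)))
    have hPA : P A = (1/2 : ENNReal)^n := crg_event_prob P ξ hξindep hξ₁ hξ₂ e he n
    -- on A, the walk follows the path
    have hwalk : ∀ ω ∈ A, ∀ k, k ≤ n → X k ω = (if k ≤ m then -(k:ℝ) else (k:ℝ) - 2*(m:ℝ)) := by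
      intro ω hω k hk
      rw [hX k ω, ← crg_path_sum m k]
      refine Finset.sum_congr rfl fun i hi => ?_
      have hin : i ∈ Finset.range n := by
        simp only [Finset.mem_range] at hi ⊢; omega
      have hmem : ω ∈ {ω | ξ i ω = e i} := by
        have := Set.mem_iInter₂.mp hω i hin
        exact this
      exact hmem
    have hle : ∀ᵐ ω ∂P, 1/(t + (τm ω:ℝ)) ≤ 1/(t + (τ ω:ℝ)) := by
      filter_upwards [hGne] with ω hne'
      have h1 : τ ω ≤ τm ω := by
        rw [hτdef, hτs t x₀ ω]
        exact crg_pathwise_mono b t x₀ (fun k => X k ω) hne'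
      have h2 : (τ ω : ℝ) ≤ (τm ω : ℝ) := Nat.cast_le.2 h1
      apply one_div_le_one_div_of_le (by positivity)
      linarith
    set c : ℝ := 1/(t + (n:ℝ)) - 1/(t + (n:ℝ) + 1) with hcdef
    have hcpos : 0 < c := by
      rw [hcdef]
      have h1 : (0:ℝ) < t + n := by positivity
      have h2 : t + (n:ℝ) < t + n + 1 := by linarith
      exact sub_pos.2 (one_div_lt_one_div_of_lt h1 h2)
    have hind : ∀ᵐ ω ∂P, A.indicator (fun _ => c) ω
        ≤ 1/(t + (τ ω:ℝ)) - 1/(t + (τm ω:ℝ)) := by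
      filter_upwards [hGne, hle] with ω hne' hle'
      by_cases hωA : ω ∈ A
      · rw [Set.indicator_of_mem hωA]
        have hkn' : ∀ k, k < n → x₀ + X k ω < b (t + k) := fun k hk => by
          rw [hwalk ω hωA k hk.le]; exact hA k hk
        have hn' : x₀ + X n ω = b (t + n) := by
          rw [hwalk ω hωA n le_rfl, if_neg (by omega)]; exact hB
        obtain ⟨h1, h2⟩ := crg_path_calc b t x₀ (fun k => X k ω) n hkn' hn' hne'
        have hτω : τ ω = n := by rw [hτdef, hτs t x₀ ω]; exact h1
        have hτmω : n + 1 ≤ τm ω := h2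
        have hub : 1/(t + (τm ω:ℝ)) ≤ 1/(t + (n:ℝ) + 1) := by
          apply one_div_le_one_div_of_le (by positivity)
          have h3 : ((n:ℝ)) + 1 ≤ (τm ω : ℝ) := by exact_mod_cast hτmω
          linarith
        rw [hτω, hcdef]
        linarith
      · rw [Set.indicator_of_notMem hωA]
        linarith
    have hint_p : Integrable (fun ω => 1/(t + (τ ω:ℝ))) P := (crg_oneover P t ht τ hτm).1
    have hint_m : Integrable (fun ω => 1/(t + (τm ω:ℝ))) P := (crg_oneover P t ht τm hτmm).1
    have hindint : Integrable (A.indicator (fun _ => c)) P :=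
      (integrable_indicator_iff hAmeas).2 (integrableOn_const (measure_ne_top _ _))
    have h1 : ∫ ω, A.indicator (fun _ => c) ω ∂P
        ≤ ∫ ω, (1/(t + (τ ω:ℝ)) - 1/(t + (τm ω:ℝ))) ∂P :=
      integral_mono_ae hindint (hint_p.sub hint_m) hind
    rw [integral_indicator_const c hAmeas, integral_sub hint_p hint_m, measureReal_def] at h1
    have hPA' : (P A).toReal = (1/2:ℝ)^n := by
      rw [hPA, ENNReal.toReal_pow]
      norm_num
    have hpos : 0 < (P A).toReal * c := by
      rw [hPA']
      positivity
    rw [smul_eq_mul] at h1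
    have hLpeq : ∫ ω, 1/(t + (τ ω:ℝ)) ∂P = Lp := by rw [hLpdef]
    have hLmeq : ∫ ω, 1/(t + (τm ω:ℝ)) ∂P = Lm := by rw [hLmdef]
    rw [hLpeq, hLmeq] at h1
    linarith
  -- conclusion
  exact nondiff_of_two_minorants hstrict
    (fun y => by simpa [mul_comm] using hMm y)
    (fun y => by simpa [mul_comm] using hMp y)

end CRG

/-- For the Chow-Robbins game, for every `t > 0` there is a dense subset
of the `t`-section `{x | (t,x) ∈ C}` of the continuation set on which `x ↦ V t x` is not
differentiable. -/
theorem chowRobbins_value_function_not_differentiable_on_dense_subset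
    {Ω : Type*} [MeasurableSpace Ω] (P : Measure Ω) [IsProbabilityMeasure P]
    -- i.i.d. symmetric Bernoulli increments
    (ξ : ℕ → Ω → ℝ) (hξmeas : ∀ i, Measurable (ξ i))
    (hξindep : iIndepFun ξ P)
    (hξ₁ : ∀ i, P {ω | ξ i ω = -1} = 1/2) (hξ₂ : ∀ i, P {ω | ξ i ω = 1} = 1/2)
    -- the simple symmetric random walk
    (X : ℕ → Ω → ℝ) (hX : ∀ n ω, X n ω = ∑ i ∈ Finset.range n, ξ i ω)
    -- its natural filtration
    (F : Filtration ℕ ‹MeasurableSpace Ω›)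
    (hF : F = Filtration.natural ξ fun i => (hξmeas i).stronglyMeasurable)
    -- the value function of the Chow-Robbins game with gain `g t x = x / t`:
    -- supremum over (a.s.) finite stopping times
    (V : ℝ → ℝ → ℝ)
    (hV : ∀ t : ℝ, 0 < t → ∀ x : ℝ, V t x =
      sSup {v : ℝ | ∃ τ : Ω → ℕ, IsStoppingTime F (fun ω => ((τ ω : ℕ) : WithTop ℕ)) ∧
        Integrable (fun ω => (x + X (τ ω) ω) / (t + τ ω)) P ∧
        v = ∫ ω, (x + X (τ ω) ω) / (t + τ ω) ∂P})
    -- the boundary `b`: the stopping set `{V t x = x / t}` is `{(t,x) | x ≥ b t}`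
    (b : ℝ → ℝ)
    (hD : ∀ t : ℝ, 0 < t → ∀ x : ℝ, (V t x = x / t ↔ b t ≤ x))
    -- the problem is solved by the a.s. finite first entrance time into the stopping set
    (τs : ℝ → ℝ → Ω → ℕ)
    (hτs : ∀ t x : ℝ, ∀ ω, τs t x ω = sInf {n : ℕ | b (t + n) ≤ x + X n ω})
    (hτstop : ∀ t x : ℝ, IsStoppingTime F (fun ω => ((τs t x ω : ℕ) : WithTop ℕ)))
    (hτfin : ∀ t : ℝ, 0 < t → ∀ x : ℝ, ∀ᵐ ω ∂P, ∃ n : ℕ, b (t + n) ≤ x + X n ω)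
    (hsolve : ∀ t : ℝ, 0 < t → ∀ x : ℝ,
      Integrable (fun ω => (x + X (τs t x ω) ω) / (t + τs t x ω)) P ∧
      V t x = ∫ ω, (x + X (τs t x ω) ω) / (t + τs t x ω) ∂P)
    -- `b` is monotonic, unbounded, and grows slowly
    (hmono : Monotone b ∨ Antitone b)
    (hunbdd : ¬ ∃ M : ℝ, ∀ t : ℝ, 0 < t → |b t| ≤ M)
    (hslow : Tendsto (fun t : ℝ => b (t + 1) - b t) atTop (nhds 0)) :
    ∀ t : ℝ, 0 < t → ∃ S : Set ℝ,
      S ⊆ {x : ℝ | x / t < V t x} ∧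
      {x : ℝ | x / t < V t x} ⊆ closure S ∧
      ∀ x ∈ S, ¬ DifferentiableAt ℝ (fun y => V t y) x := by
  classical
  have hae := crg_ae_pm P ξ hξmeas hξ₁ hξ₂
  have hXmeas := crg_Xmeas ξ hξmeas X hX
  have hXbdd := crg_Xbdd P ξ X hX hae
  have hX0 : ∀ ω, X 0 ω = 0 := fun ω => by rw [hX]; simp
  have hEX := crg_EX P ξ hξmeas hξ₁ hξ₂ X hX
  have hVs : ∀ s : ℝ, 0 < s → ∀ z : ℝ, V s z = sSup (crgSet P X F s z) :=
    fun s hs z => hV s hs z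
  have hBmono : Monotone b := by
    rcases hmono with h | h
    · exact h
    · exact (crg_antitone_false P X hXmeas hXbdd hX0 hEX F V hVs b hD h hunbdd).elim
  have hlim : ∀ M : ℝ, ∃ s : ℝ, 0 < s ∧ M < b s := by
    intro M
    by_contra hc
    push_neg at hc
    apply hunbdd
    refine ⟨max M (|b 0|), fun s hs => ?_⟩
    have h1 : b 0 ≤ b s := hBmono (le_of_lt hs)
    rw [abs_le]
    constructor
    · have h2 : -(|b 0|) ≤ b 0 := neg_abs_le _
      have h3 : -(max M (|b 0|)) ≤ -(|b 0|) := neg_le_neg (le_max_right _ _)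
      linarith
    · exact le_trans (hc s hs) (le_max_left _ _)
  intro t ht
  refine ⟨{x : ℝ | x < b t ∧ ¬ DifferentiableAt ℝ (fun y => V t y) x}, ?_, ?_, ?_⟩
  · rintro x ⟨hxb, -⟩
    simp only [mem_setOf_eq]
    have hlow := crg_lower P X hXmeas hXbdd hX0 F V t ht (hVs t ht) x
    have hneq : V t x ≠ x / t := fun h => absurd ((hD t ht x).1 h) (not_le.2 hxb)
    exact lt_of_le_of_ne hlow (Ne.symm hneq)
  · intro u hu
    simp only [mem_setOf_eq] at hu
    have hub : u < b t := by
      by_contra hc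
      push_neg at hc
      have := (hD t ht u).2 hc
      linarith
    rw [Metric.mem_closure_iff]
    intro ε hε
    set β : ℝ := min (u + ε) ((u + b t)/2) with hβ
    have hαβ : u < β := lt_min (by linarith) (by linarith)
    have hβb : β ≤ b t := le_trans (min_le_right _ _) (by linarith)
    obtain ⟨n, m, x₀, h1, h2, hmn, hcondA, hcondB⟩ :=
      crg_window b hBmono hslow hlim t ht u β hαβ hβb
    refine ⟨x₀, ⟨?_, ?_⟩, ?_⟩
    · have h3 : β ≤ (u + b t)/2 := min_le_right _ _
      linarith
    · exact crg_kink P ξ hξmeas hξindep hξ₁ hξ₂ X hX F V b τs hτs hτstop hτfin hsolve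
        t ht (hVs t ht) n m hmn x₀ hcondA hcondB
    · rw [Real.dist_eq, abs_of_neg (by linarith : u - x₀ < 0)]
      have h3 : β ≤ u + ε := min_le_left _ _
      linarith
  · rintro x ⟨-, h⟩
    exact h
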